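/- (Table 3, third row.) Assume r_D ≤ 1 and r_D < r_A. Then (1, r_D, 0) is a Nash equilibrium of the game with objectives (J_A, J_D, J_I): J_A(1,r_D,0) ≤ J_A(α,r_D,0) for all α ∈ (0,1], J_D(1,r_D,0) ≤ J_D(1,β,0) for all β ∈ (0,1], and J_I(1,r_D,0) ≥ J_I(1,r_D,γ) for all γ ∈ [0,1]. -/

import Mathlib

/-- Attacker's average cost. -/
noncomputable def JA (pA qA α β γ : ℝ) : ℝ :=
  (pA * (1 - γ) ^ 2 + qA * α ^ 2 + γ ^ 2) * (β / (α + β)) ^ 2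

/-- Defender's average cost. -/
noncomputable def JD (pD qD α β γ : ℝ) : ℝ :=
  (pD * (1 - γ) ^ 2 + qD * β ^ 2 + γ ^ 2) * (α / (α + β)) ^ 2

/-- Insider's average profit. -/
noncomputable def JI (pI qI α β γ : ℝ) : ℝ :=
  (pI + γ ^ 2) * (β / (α + β)) ^ 2 - (qI * γ + γ ^ 2 / 2)

/-- Attacker's reduced cost (no cooperation with the insider): J_A⁰(α,β) = J_A(α,β,0). -/
noncomputable def JA0 (pA qA α β : ℝ) : ℝ := JA pA qA α β 0

/-- Defender's reduced cost (unaware of the insider): J_D⁰(α,β) = J_D(α,β,0). -/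
noncomputable def JD0 (pD qD α β : ℝ) : ℝ := JD pD qD α β 0


/-- Table 3, third row. -/
theorem table3_third_row (pA pD pI qA qD qI rA rD : ℝ)
    (hpA : pA ∈ Set.Ioo (0:ℝ) 1) (hpD : pD ∈ Set.Ioo (0:ℝ) 1) (hpI : pI ∈ Set.Ioo (0:ℝ) 1)
    (hqA : 0 < qA) (hqD : 0 < qD) (hqI : 0 ≤ qI)
    (hrA : rA = pA / qA) (hrD : rD = pD / qD)
    (h1 : rD ≤ 1) (h2 : rD < rA) :
    (∀ α ∈ Set.Ioc (0:ℝ) 1, JA pA qA 1 rD 0 ≤ JA pA qA α rD 0) ∧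
    (∀ β ∈ Set.Ioc (0:ℝ) 1, JD pD qD 1 rD 0 ≤ JD pD qD 1 β 0) ∧
    (∀ γ ∈ Set.Icc (0:ℝ) 1, JI pI qI 1 rD γ ≤ JI pI qI 1 rD 0) := by

  have h0 : 0 < rD := by
    rw [hrD]; exact div_pos hpD.1 hqD
  have h1r : (0:ℝ) < 1 + rD := by linarith
  have hArD : qA * rD < pA := by
    have := h2
    rw [hrA, lt_div_iff₀ hqA] at this
    linarith
  have hpDq : pD = rD * qD := by
    rw [hrD, div_mul_cancel₀ pD (ne_of_gt hqD)]
  refine ⟨?_, ?_, ?_⟩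
  · intro α hα
    obtain ⟨hα0, hα1⟩ := hα
    have hαr : 0 < α + rD := by linarith
    simp only [JA]
    rw [div_pow, div_pow, ← mul_div_assoc, ← mul_div_assoc,
      div_le_div_iff₀ (by positivity) (by positivity)]
    have e1 : 0 ≤ rD^2 * ((1-α) * ((pA - qA*rD) * (2*α + rD*(1+α)))) := by
      have : 0 ≤ 2*α + rD*(1+α) := by nlinarith
      have : 0 ≤ (pA - qA*rD) * (2*α + rD*(1+α)) :=
        mul_nonneg (by linarith) this
      exact mul_nonneg (sq_nonneg rD) (mul_nonneg (by linarith) this)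
    have e2 : 0 ≤ rD^2 * (pA * (1-α)^2 * (1+rD)) :=
      mul_nonneg (sq_nonneg rD) (mul_nonneg (mul_nonneg hpA.1.le (sq_nonneg _)) h1r.le)
    nlinarith [e1, e2]
  · intro β hβ
    obtain ⟨hβ0, hβ1⟩ := hβ
    have hβr : (0:ℝ) < 1 + β := by linarith
    simp only [JD]
    rw [div_pow, div_pow, ← mul_div_assoc, ← mul_div_assoc,
      div_le_div_iff₀ (by positivity) (by positivity)]
    have e1 : 0 ≤ qD * (1+rD) * (β - rD)^2 :=
      mul_nonneg (mul_nonneg hqD.le h1r.le) (sq_nonneg _)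
    nlinarith [e1]
  · intro γ hγ
    obtain ⟨hγ0, hγ1⟩ := hγ
    simp only [JI]
    have hc : (rD/(1+rD))^2 ≤ 1/2 := by
      rw [div_pow, div_le_iff₀ (by positivity)]
      nlinarith
    have h3 : γ^2 * (rD/(1+rD))^2 ≤ γ^2 * (1/2) :=
      mul_le_mul_of_nonneg_left hc (sq_nonneg γ)
    have h4 : 0 ≤ qI * γ := mul_nonneg hqI hγ0
    nlinarith [h3, h4]
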